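/- arXiv:2007.07822 — 2 statements merged into one kernel-verified Lean document; each statement's English description precedes it below -/
import Mathlib

section
/- Let K be a field of characteristic 2, q, p ∈ K[x] with q nonzero. The affine curve y^2 + q(x)y = p(x) has a singular point over the algebraic closure of K if and only if gcd(q(x), p'(x)^2 + q'(x)^2·p(x)) ≠ 1. -/
open Polynomial

/-- Let `K` be a field of characteristic 2 and `q, p ∈ K[x]` with `q ≠ 0`.  The affine
curve `y² + q(x)y = p(x)` has a singular point over an algebraic closure of `K`
(simultaneous vanishing of the equation and both partial derivatives, noting
`∂/∂y (y² + qy + p) = 2y + q`) if and only if `gcd(q, p'² + q'²·p) ≠ 1`, i.e. `q` and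
`p'² + q'²·p` are not coprime. -/
theorem singular_iff_not_coprime_char2 {K : Type*} [Field K] [CharP K 2]
    (q p : Polynomial K) (hq : q ≠ 0) :
    (∃ a b : AlgebraicClosure K,
        b ^ 2 + Polynomial.aeval a q * b + Polynomial.aeval a p = 0 ∧
        Polynomial.aeval a (derivative q) * b + Polynomial.aeval a (derivative p) = 0 ∧
        2 * b + Polynomial.aeval a q = 0) ↔
      ¬ IsCoprime q (derivative p ^ 2 + derivative q ^ 2 * p) := by
  have h2 : (2 : AlgebraicClosure K) = 0 := by
    have := charP_of_injective_algebraMap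
      (algebraMap K (AlgebraicClosure K)).injective 2
    exact_mod_cast CharP.cast_eq_zero (AlgebraicClosure K) 2
  rw [isCoprime_iff_aeval_ne_zero_of_isAlgClosed (k := K) (AlgebraicClosure K)]
  push_neg
  constructor
  · rintro ⟨a, b, h1, hd, h3⟩
    have hA : aeval a q = 0 := by
      have : (2 : AlgebraicClosure K) * b = 0 := by rw [h2, zero_mul]
      linear_combination h3 - this
    refine ⟨a, hA, ?_⟩
    have hb2 : b ^ 2 + aeval a p = 0 := by linear_combination h1 - b * hA
    have hP' : aeval a (derivative q) * b = - aeval a (derivative p) := by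
      linear_combination hd
    simp only [map_add, map_pow, map_mul]
    -- (q' b)² = q'² b², p' = -q' b, b² = -p
    linear_combination (aeval a (derivative q))^2 * hb2 -
      (aeval a (derivative p) - aeval a (derivative q) * b) * hd +
      ((aeval a (derivative p))^2 - (aeval a (derivative q))^2 * b^2) * h2
  · rintro ⟨a, hA, hR⟩
    simp only [map_add, map_pow, map_mul] at hR
    obtain ⟨b, hb⟩ := IsAlgClosed.exists_pow_nat_eq (k := AlgebraicClosure K)
      (- aeval a p) (n := 2) (by norm_num)
    refine ⟨a, b, ?_, ?_, ?_⟩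
    · rw [hA]; ring_nf; linear_combination hb
    · have hsq : (aeval a (derivative q) * b + aeval a (derivative p)) ^ 2 = 0 := by
        have : (2 : AlgebraicClosure K) *
            (aeval a (derivative q) * b * aeval a (derivative p)) = 0 := by
          rw [h2, zero_mul]
        linear_combination hR + (aeval a (derivative q))^2 * hb + this -
          (aeval a (derivative q))^2 * aeval a p * h2
      exact pow_eq_zero_iff (by norm_num) |>.mp hsq
    · rw [hA, h2, zero_mul, add_zero]
end

section
/- Let q(x) = x(x+1) = x^2 + x and p(x) = Σ_i a_i x^i ∈ F_2[x]. Then gcd(q(x), p'(x)^2 + q'(x)^2 p(x)) = 1 if and only if a_1 ≠ a_0 and Σ_{i=0}^{5} a_{2i} = 1 (where a_i = 0 for i beyond the degree of p). -/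
open Polynomial

/-- For `q(x) = x(x+1) = x² + x` over `F₂` and `p = Σ aᵢ xⁱ` of degree at most 10,
`gcd(q, p'² + q'²·p) = 1` iff `a₁ ≠ a₀` and `Σ_{i=0}^{5} a_{2i} = 1`. -/
theorem coprime_criterion_q_eq_X_sq_add_X (p : Polynomial (ZMod 2))
    (hdeg : p.natDegree ≤ 10) :
    IsCoprime (X ^ 2 + X : Polynomial (ZMod 2))
        (derivative p ^ 2 + derivative (X ^ 2 + X : Polynomial (ZMod 2)) ^ 2 * p) ↔
      (p.coeff 1 ≠ p.coeff 0 ∧ ∑ i ∈ Finset.range 6, p.coeff (2 * i) = 1) := by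
  have key : ∀ (a : ZMod 2) (f : (ZMod 2)[X]), IsCoprime (X - C a) f ↔ f.eval a ≠ 0 := by
    intro a f
    rw [(prime_X_sub_C a).coprime_iff_not_dvd, dvd_iff_isRoot, IsRoot]
  have hq : derivative (X ^ 2 + X : (ZMod 2)[X]) = 1 := by
    rw [derivative_add, derivative_X_pow, derivative_X]
    norm_num
    exact (by decide : (2 : ZMod 2) = 0) ▸ by ring
  have hx2 : ∀ x : ZMod 2, x ^ 2 = x := by decide
  set f : (ZMod 2)[X] := derivative p ^ 2 + derivative (X ^ 2 + X : Polynomial (ZMod 2)) ^ 2 * p with hf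
  have hfac : (X ^ 2 + X : (ZMod 2)[X]) = (X - C 0) * (X - C 1) := by
    simp only [map_zero, map_one, sub_zero, CharTwo.sub_eq_add]
    ring
  rw [hfac, IsCoprime.mul_left_iff, key, key]
  -- eval at 0
  have h0 : f.eval 0 = p.coeff 1 + p.coeff 0 := by
    simp [hf, hq, ← coeff_zero_eq_eval_zero, coeff_derivative, hx2]
  -- eval at 1
  have hd : (derivative p).natDegree < 11 :=
    lt_of_le_of_lt ((natDegree_derivative_le p).trans (Nat.sub_le_sub_right hdeg 1)) (by norm_num)
  have hp11 : p.natDegree < 11 := lt_of_le_of_lt hdeg (by norm_num)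
  have h1 : f.eval 1 = ∑ i ∈ Finset.range 6, p.coeff (2 * i) := by
    have e1 : (derivative p).eval 1 = ∑ i ∈ Finset.range 11, (derivative p).coeff i := by
      rw [eval_eq_sum_range' hd]; simp
    have e2 : p.eval 1 = ∑ i ∈ Finset.range 11, p.coeff i := by
      rw [eval_eq_sum_range' hp11]; simp
    have hc11 : p.coeff 11 = 0 := coeff_eq_zero_of_natDegree_lt (lt_of_le_of_lt hdeg (by norm_num))
    simp only [hf, eval_add, eval_pow, eval_mul, hq, eval_one, hx2, one_pow, one_mul]
    rw [e1, e2]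
    simp only [coeff_derivative]
    simp [Finset.sum_range_succ]
    rw [hc11]
    simp only [show (4:ZMod 2)=0 from by decide, show (5:ZMod 2)=1 from by decide,
      show (6:ZMod 2)=0 from by decide, show (7:ZMod 2)=1 from by decide,
      show (8:ZMod 2)=0 from by decide, show (9:ZMod 2)=1 from by decide,
      show (10:ZMod 2)=0 from by decide, show (11:ZMod 2)=1 from by decide,
      show (2:ZMod 2)=0 from by decide, show (3:ZMod 2)=1 from by decide,
      mul_zero, mul_one]
    ring_nf
    simp only [show (2:ZMod 2)=0 from by decide, show (3:ZMod 2)=1 from by decide,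
      mul_zero, mul_one]
    ring
  rw [h0, h1]
  constructor
  · rintro ⟨ha, hb⟩
    refine ⟨fun h => ha (by rw [h]; simp [CharTwo.add_self_eq_zero]), ?_⟩
    revert hb; generalize (∑ i ∈ Finset.range 6, p.coeff (2 * i)) = s; revert s; decide
  · rintro ⟨ha, hb⟩
    refine ⟨?_, by rw [hb]; decide⟩
    revert ha; generalize p.coeff 1 = a; generalize p.coeff 0 = b; revert a b; decide
end
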